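/- Let G be a finite connected simple graph, let ρ be a rotation system for G, and let γ ∈ Γ_ρ(G) be a map automorphism (a graph automorphism with γ·ρ = ρ). If there exist adjacent vertices u and v with γ(u) = u and γ(v) = v, then γ is the identity automorphism. -/

import Mathlib

/-- A rotation system for a simple graph `G`. -/
def IsRotationSystem {V : Type*} (G : SimpleGraph V) (ρ : V → Equiv.Perm V) : Prop :=
  ∀ v : V, (ρ v).IsCycleOn (G.neighborSet v) ∧ ∀ w : V, w ∉ G.neighborSet v → ρ v w = w

/-- The action of a permutation `γ` on rotation systems: `(γ·ρ)_{γ(v)} = γ ∘ ρ_v ∘ γ⁻¹`. -/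
def rotAct {V : Type*} (γ : Equiv.Perm V) (ρ : V → Equiv.Perm V) : V → Equiv.Perm V :=
  fun w => γ * ρ (γ⁻¹ w) * γ⁻¹

/-- The automorphism group `Γ(G)` of a simple graph, as a set of permutations. -/
def autSet {V : Type*} (G : SimpleGraph V) : Set (Equiv.Perm V) :=
  {γ | ∀ u w : V, G.Adj (γ u) (γ w) ↔ G.Adj u w}

/-- Theorem: a map automorphism of a connected graph which fixes two adjacent vertices is the
identity. -/
theorem map_automorphism_fixing_adjacent_eq_one {V : Type*} [Fintype V] [DecidableEq V]
    (G : SimpleGraph V) (hG : G.Connected)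
    (ρ : V → Equiv.Perm V) (hρ : IsRotationSystem G ρ)
    (γ : Equiv.Perm V) (hγ : γ ∈ autSet G) (hfix : rotAct γ ρ = ρ)
    (u v : V) (huv : G.Adj u v) (hu : γ u = u) (hv : γ v = v) :
    γ = 1 := by
  -- Key lemma: if γ fixes two adjacent vertices a, b, it fixes all neighbors of a.
  have key : ∀ a b : V, G.Adj a b → γ a = a → γ b = b → ∀ c : V, G.Adj a c → γ c = c := by
    intro a b hab ha hb c hac
    have hainv : γ⁻¹ a = a := by
      conv_lhs => rw [← ha]
      exact γ.symm_apply_apply a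
    have hcomm : γ * ρ a = ρ a * γ := by
      have h := congrFun hfix a
      rw [rotAct, hainv] at h
      calc γ * ρ a = (γ * ρ a * γ⁻¹) * γ := by group
        _ = ρ a * γ := by rw [h]
    have hb' : b ∈ G.neighborSet a := hab
    have hc' : c ∈ G.neighborSet a := hac
    obtain ⟨n, hn⟩ := (hρ a).1.2 hb' hc'
    have hcz : Commute γ ((ρ a) ^ n) := Commute.zpow_right hcomm n
    have : γ (((ρ a) ^ n) b) = ((ρ a) ^ n) (γ b) := by
      have := congrFun (congrArg (fun f : Equiv.Perm V => (f : V → V)) hcz.eq) b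
      simpa [Equiv.Perm.mul_apply] using this
    rw [hn, hb, hn] at this
    exact this
  -- Walk induction
  have walkfix : ∀ a x : V, G.Walk a x → γ a = a → (∀ y : V, G.Adj a y → γ y = y) →
      γ x = x := by
    intro a x p
    induction p with
    | nil => intro ha _; exact ha
    | cons h q ih =>
      intro ha hnb
      rename_i a' w' x'
      exact ih (hnb _ h) (key _ _ h.symm (hnb _ h) ha)
  have hall : ∀ x : V, γ x = x := by
    intro x
    obtain ⟨p⟩ := hG.preconnected u x
    exact walkfix u x p hu (key u v huv hu hv)
  ext x
  simpa using hall x
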